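/- Let P be a monic polynomial of degree n over ℂ and let ξ_1, …, ξ_n be distinct complex numbers. Let Q(z) = ∏(z - ξ_i). Then every zero of P lies in the union of the closed disks Γ_i = { z : |z - ξ_i| ≤ n·|P(ξ_i)|/|Q'(ξ_i)| }. -/

import Mathlib

open Polynomial

/-- Smith bound (containment part): if `P` is monic of degree `n` and `ξ₁,…,ξₙ` are
distinct points with `Q(z) = ∏ (z - ξᵢ)`, then every zero of `P` lies in some disk
`|z - ξᵢ| ≤ n·|P(ξᵢ)|/|Q'(ξᵢ)|`. -/
theorem smith_bound_containment (n : ℕ) (hn : 1 ≤ n)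
    (P : Polynomial ℂ) (hP : P.Monic) (hdeg : P.natDegree = n)
    (ξ : Fin n → ℂ) (hξ : Function.Injective ξ)
    (Q : Polynomial ℂ) (hQ : Q = ∏ i : Fin n, (X - C (ξ i))) :
    ∀ z : ℂ, P.eval z = 0 →
      ∃ i : Fin n, ‖z - ξ i‖ ≤
        n * ‖P.eval (ξ i)‖ / ‖(derivative Q).eval (ξ i)‖ := by
  intro z hz
  have hQnodal : Q = Lagrange.nodal Finset.univ ξ := by
    rw [hQ, Lagrange.nodal_eq]
  by_cases hznode : ∃ i : Fin n, z = ξ i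
  · obtain ⟨i, rfl⟩ := hznode
    refine ⟨i, ?_⟩
    simp only [sub_self, map_zero, norm_zero]
    positivity
  push_neg at hznode
  have hznode' : ∀ i ∈ (Finset.univ : Finset (Fin n)), z ≠ ξ i := fun i _ => hznode i
  have hinj : Set.InjOn ξ (Finset.univ : Finset (Fin n)) := hξ.injOn
  have hQmonic : Q.Monic := hQnodal ▸ Lagrange.nodal_monic
  have hQdeg : Q.natDegree = n := by
    rw [hQnodal, Lagrange.natDegree_nodal]; simp
  have hPne : P ≠ 0 := hP.ne_zero
  have hPdeg' : P.degree = (n : ℕ) := by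
    rw [Polynomial.degree_eq_natDegree hPne, hdeg]
  have hQdeg' : Q.degree = (n : ℕ) := by
    rw [Polynomial.degree_eq_natDegree hQmonic.ne_zero, hQdeg]
  set R : Polynomial ℂ := P - Q with hR
  have hRdeg : R.degree < (Finset.univ : Finset (Fin n)).card := by
    rcases eq_or_ne R 0 with h | h
    · rw [h]; simp only [degree_zero, Finset.card_univ, Fintype.card_fin]
      exact_mod_cast WithBot.bot_lt_coe _
    · have h1 : R.degree < P.degree :=
        Polynomial.degree_sub_lt (hPdeg'.trans hQdeg'.symm) hPne
          (by rw [hP.leadingCoeff, hQmonic.leadingCoeff])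
      calc R.degree < P.degree := h1
        _ = (n : ℕ) := hPdeg'
        _ ≤ _ := by simp
  have key := Lagrange.eq_interpolate hinj hRdeg
  have heval : R.eval z =
      (Lagrange.nodal Finset.univ ξ).eval z *
        ∑ i : Fin n, Lagrange.nodalWeight Finset.univ ξ i * (z - ξ i)⁻¹ * R.eval (ξ i) := by
    conv_lhs => rw [key]
    exact Lagrange.eval_interpolate_not_at_node _ hznode'
  have hQz : Q.eval z ≠ 0 := by
    rw [hQnodal]; exact Lagrange.eval_nodal_not_at_node hznode'
  have hRvals : ∀ i : Fin n, R.eval (ξ i) = P.eval (ξ i) := by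
    intro i
    have : Q.eval (ξ i) = 0 := by
      rw [hQnodal]; exact Lagrange.eval_nodal_at_node (Finset.mem_univ i)
    simp [hR, this]
  have hw : ∀ i : Fin n, Lagrange.nodalWeight Finset.univ ξ i
      = ((derivative Q).eval (ξ i))⁻¹ := by
    intro i
    rw [Lagrange.nodalWeight_eq_eval_derivative_nodal (Finset.mem_univ i), hQnodal]
  have hRz : R.eval z = -(Q.eval z) := by simp [hR, hz]
  -- the key identity
  have hsum : ∑ i : Fin n,
      ((derivative Q).eval (ξ i))⁻¹ * (z - ξ i)⁻¹ * P.eval (ξ i) = -1 := by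
    have h2 : Q.eval z * ∑ i : Fin n,
        ((derivative Q).eval (ξ i))⁻¹ * (z - ξ i)⁻¹ * P.eval (ξ i) = Q.eval z * (-1) := by
      have := heval
      rw [hRz, ← hQnodal] at this
      simp_rw [hw, hRvals] at this
      rw [← this]; ring
    exact mul_left_cancel₀ hQz h2
  -- pass to absolute values
  have habs : (1 : ℝ) ≤ ∑ i : Fin n,
      ‖((derivative Q).eval (ξ i))⁻¹ * (z - ξ i)⁻¹ * P.eval (ξ i)‖ := by
    calc (1 : ℝ) = ‖(-1 : ℂ)‖ := by simp
      _ = ‖∑ i : Fin n,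
            ((derivative Q).eval (ξ i))⁻¹ * (z - ξ i)⁻¹ * P.eval (ξ i)‖ := by rw [hsum]
      _ ≤ _ := norm_sum_le _ _
  -- extract an index with a large term
  have hne : (Finset.univ : Finset (Fin n)).Nonempty := ⟨⟨0, hn⟩, Finset.mem_univ _⟩
  obtain ⟨i, -, hi⟩ : ∃ i ∈ (Finset.univ : Finset (Fin n)), (1 : ℝ) / n ≤
      ‖((derivative Q).eval (ξ i))⁻¹ * (z - ξ i)⁻¹ * P.eval (ξ i)‖ := by
    by_contra hcon
    push_neg at hcon
    have : ∑ i : Fin n,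
        ‖((derivative Q).eval (ξ i))⁻¹ * (z - ξ i)⁻¹ * P.eval (ξ i)‖
        < ∑ _i : Fin n, (1 : ℝ) / n :=
      Finset.sum_lt_sum_of_nonempty hne (fun i hi => hcon i hi)
    rw [Finset.sum_const, Finset.card_univ, Fintype.card_fin, nsmul_eq_mul,
      mul_one_div, div_self (by positivity : (n : ℝ) ≠ 0)] at this
    linarith
  refine ⟨i, ?_⟩
  have hzi : z - ξ i ≠ 0 := sub_ne_zero.mpr (hznode i)
  have hwne : Lagrange.nodalWeight Finset.univ ξ i ≠ 0 :=
    Lagrange.nodalWeight_ne_zero hinj (Finset.mem_univ i)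
  have hQ'ne : (derivative Q).eval (ξ i) ≠ 0 := by
    intro h
    exact hwne (by rw [hw i, h, inv_zero])
  have ha : 0 < ‖z - ξ i‖ := norm_pos_iff.mpr hzi
  have hb : 0 < ‖(derivative Q).eval (ξ i)‖ := norm_pos_iff.mpr hQ'ne
  have hn' : (0 : ℝ) < n := by exact_mod_cast hn
  rw [norm_mul, norm_mul, norm_inv, norm_inv] at hi
  set a := ‖z - ξ i‖
  set b := ‖(derivative Q).eval (ξ i)‖
  set c := ‖P.eval (ξ i)‖
  rw [le_div_iff₀ hb]
  have h3 : a * b * (1 / n) ≤ a * b * (b⁻¹ * a⁻¹ * c) :=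
    mul_le_mul_of_nonneg_left hi (by positivity)
  have h4 : a * b * (b⁻¹ * a⁻¹ * c) = c := by
    field_simp
  rw [h4] at h3
  calc a * b = (a * b * (1 / n)) * n := by field_simp
    _ ≤ c * n := by nlinarith
    _ = n * c := by ring
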